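/- Let A be a skew left brace with λ_a(b) = a⁻¹(a∘b) and ρ_b(a) = (λ_a(b))'∘a∘b. Then the pair of actions (λ, ρ) forms a matched pair of groups on ((A,∘),(A,∘)): for all a,b,c ∈ A, λ_a(b∘c) = λ_a(b) ∘ λ_{ρ_b(a)}(c) and ρ_c(a∘b) = ρ_{λ_b(c)}(a) ∘ ρ_c(b). -/

import Mathlib

structure SkewLeftBrace (A : Type*) [Group A] where
  circ : A → A → A
  one' : A
  inv' : A → A
  circ_assoc : ∀ a b c : A, circ (circ a b) c = circ a (circ b c)
  one'_circ : ∀ a : A, circ one' a = a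
  circ_one' : ∀ a : A, circ a one' = a
  inv'_circ : ∀ a : A, circ (inv' a) a = one'
  circ_inv' : ∀ a : A, circ a (inv' a) = one'
  compat : ∀ a b c : A, circ a (b * c) = circ a b * a⁻¹ * circ a c

/-- `(λ, ρ)` forms a matched pair of the group `(A,∘)` with itself:
`λ_a(b∘c) = λ_a(b) ∘ λ_{ρ_b(a)}(c)` and `ρ_c(a∘b) = ρ_{λ_b(c)}(a) ∘ ρ_c(b)`. -/
theorem skewLeftBrace_matched_pair {A : Type*} [Group A] (B : SkewLeftBrace A)
    (lam rho : A → A → A) (hlam : ∀ a b, lam a b = a⁻¹ * B.circ a b)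
    (hrho : ∀ a b, rho b a = B.circ (B.circ (B.inv' (lam a b)) a) b) :
    (∀ a b c, lam a (B.circ b c) = B.circ (lam a b) (lam (rho b a) c)) ∧
    (∀ a b c, rho c (B.circ a b) = B.circ (rho (lam b c) a) (rho c b)) := by
  have hone : B.one' = 1 := by
    have h := B.compat B.one' B.one' B.one'
    rw [B.one'_circ, B.one'_circ] at h
    have h2 : B.one' * B.one' = B.one' := by rw [h]; group
    exact mul_eq_right.mp h2
  have key : ∀ x y, B.circ x y = x * lam x y := by
    intro x y; rw [hlam]; group
  have lam_mul : ∀ a x y, lam a (x * y) = lam a x * lam a y := by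
    intro a x y; simp only [hlam, B.compat]; group
  have lam_circ : ∀ a b c, lam (B.circ a b) c = lam a (lam b c) := by
    intro a b c
    rw [hlam (B.circ a b) c, B.circ_assoc, key b c, B.compat, hlam a (lam b c)]
    group
  have lam_one : ∀ x, lam B.one' x = x := by
    intro x; rw [hlam, B.one'_circ, hone]; group
  have circ_cancel : ∀ x y, B.circ x (B.circ (B.inv' x) y) = y := by
    intro x y; rw [← B.circ_assoc, B.circ_inv', B.one'_circ]
  have lam_cancel : ∀ x z, lam x (lam (B.inv' x) z) = z := by
    intro x z; rw [← lam_circ, B.circ_inv', lam_one]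
  constructor
  · intro a b c
    rw [hrho a b, lam_circ, lam_circ, key (lam a b), lam_cancel, ← lam_mul,
      ← key b c]
  · intro a b c
    rw [hrho (B.circ a b) c, hrho a (lam b c), hrho b c, lam_circ]
    simp only [B.circ_assoc, circ_cancel]
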